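/- Let G be a groupoid and H_1,…,H_n wide subgroupoids satisfying: (i) G = H_1⋯H_n (every element of G is a composite h_1⋯h_n with h_i ∈ H_i); (ii) each H_i is normal in G; (iii) H_i ∩ (H_1⋯H_{i−1}H_{i+1}⋯H_n) = G_0 for every i. Then for all i ≠ j and all x ∈ H_i, y ∈ H_j with r(y)=d(x)=r(x)=d(y), one has xy = yx. -/

import Mathlib

universe u v

/-- A groupoid in the axiomatic sense: a set with a partial multiplication
(`D g h` means the product `gh` is defined, `mul` is a total function whose
value is only meaningful when the product is defined) and a total inversion. -/
class Gpd (G : Type u) where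
  mul : G → G → G
  inv : G → G
  D : G → G → Prop
  inv_left : ∀ g, D (inv g) g
  inv_right : ∀ g, D g (inv g)
  D_iff : ∀ g h, D g h ↔ mul (inv g) g = mul h (inv h)
  assoc : ∀ g h k, D g h → D h k →
    D (mul g h) k ∧ D g (mul h k) ∧ mul (mul g h) k = mul g (mul h k)
  inv_cancel_left : ∀ g h, D g h → mul (inv g) (mul g h) = h
  inv_cancel_right : ∀ g h, D g h → mul (mul g h) (inv h) = g

namespace Gpd

variable {G : Type u} [Gpd G]

/-- The domain `d(g) = g⁻¹g`. -/
def d (g : G) : G := mul (inv g) g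

/-- The range `r(g) = gg⁻¹`. -/
def r (g : G) : G := mul g (inv g)

/-- Identities (= idempotents) of the groupoid. -/
def IsId (e : G) : Prop := D e e ∧ mul e e = e

/-- The set `G₀` of identities of `G`. -/
def objs (G : Type u) [Gpd G] : Set G := {e | IsId e}

/-- Subgroupoid: a nonempty subset closed under inverses and defined products. -/
def IsSubgroupoid (H : Set G) : Prop :=
  H.Nonempty ∧ (∀ h ∈ H, inv h ∈ H) ∧
    ∀ g h : G, g ∈ H → h ∈ H → D g h → mul g h ∈ H

/-- Wide subgroupoid: a subgroupoid containing all identities of `G`. -/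
def IsWide (H : Set G) : Prop := IsSubgroupoid H ∧ objs G ⊆ H

/-- Normal subgroupoid: wide and closed under defined conjugations `g⁻¹hg`. -/
def IsNormal (H : Set G) : Prop :=
  IsWide H ∧ ∀ g h : G, h ∈ H → D (inv g) h → D (mul (inv g) h) g →
    mul (mul (inv g) h) g ∈ H

end Gpd

open Gpd

section Aux

namespace Gpd

variable {G : Type u} [Gpd G]

lemma D_dr {g h : G} : D g h ↔ d g = r h := D_iff g h

lemma d_inv (g : G) : d (inv g) = r g := D_dr.mp (inv_left g)

lemma d_eq_r_inv (g : G) : d g = r (inv g) := D_dr.mp (inv_right g)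

lemma D_dg_inv (g : G) : D (d g) (inv g) :=
  (assoc (inv g) g (inv g) (inv_left g) (inv_right g)).1

lemma mul_dg_inv (g : G) : mul (d g) (inv g) = inv g :=
  inv_cancel_right (inv g) g (inv_left g)

lemma mul_invinv_dg (g : G) : mul (inv (inv g)) (d g) = g :=
  inv_cancel_left (inv g) g (inv_left g)

lemma mul_rg_g (g : G) : mul (r g) g = g := by
  have h1 := (assoc (inv (inv g)) (inv g) g (inv_left (inv g)) (inv_left g)).2.2
  have h2 : mul (inv (inv g)) (inv g) = r g := d_inv g
  rw [h2] at h1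
  rw [h1]
  exact mul_invinv_dg g

lemma mul_g_dg (g : G) : mul g (d g) = g := by
  show mul g (mul (inv g) g) = g
  rw [← (assoc g (inv g) g (inv_right g) (inv_left g)).2.2]
  exact mul_rg_g g

lemma D_g_dg (g : G) : D g (d g) :=
  (assoc g (inv g) g (inv_right g) (inv_left g)).2.1

lemma D_rg_g (g : G) : D (r g) g :=
  (assoc g (inv g) g (inv_right g) (inv_left g)).1

lemma inv_inv' (g : G) : inv (inv g) = g := by
  have h2 : mul (inv (inv g)) (d (inv (inv g))) = inv (inv g) := mul_g_dg _
  rw [d_inv, ← d_eq_r_inv, mul_invinv_dg] at h2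
  exact h2.symm

lemma isId_d (g : G) : IsId (d g) := by
  have h := assoc (d g) (inv g) g (D_dg_inv g) (inv_left g)
  refine ⟨h.2.1, ?_⟩
  have := h.2.2
  rw [mul_dg_inv] at this
  exact this.symm

lemma isId_r (g : G) : IsId (r g) := by
  rw [← d_inv]; exact isId_d (inv g)

lemma d_of_isId {e : G} (he : IsId e) : d e = e := by
  have := inv_cancel_left e e he.1
  rw [he.2] at this
  exact this

lemma r_of_isId {e : G} (he : IsId e) : r e = e := by
  have := inv_cancel_right e e he.1
  rw [he.2] at this
  exact this

lemma d_mul {g h : G} (hD : D g h) : d (mul g h) = d h := by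
  have hDh : D h (d h) := D_g_dg h
  have ha := assoc g h (d h) hD hDh
  have key : mul (mul g h) (d h) = mul g h := by
    rw [ha.2.2, mul_g_dg]
  have := inv_cancel_left (mul g h) (d h) ha.1
  rw [key] at this
  exact this

lemma r_mul {g h : G} (hD : D g h) : r (mul g h) = r g := by
  have hDg : D (r g) g := D_rg_g g
  have ha := assoc (r g) g h hDg hD
  have key : mul (r g) (mul g h) = mul g h := by
    rw [← ha.2.2, mul_rg_g]
  have := inv_cancel_right (r g) (mul g h) ha.2.1
  rw [key] at this
  exact this

end Gpd

open Gpd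

end Aux



/-- `IsProd l g`: `g` is the (everywhere defined) composite of the list `l`. -/
inductive IsProd {G : Type u} [Gpd G] : List G → G → Prop
  | single (g : G) : IsProd [g] g
  | cons {l : List G} {p : G} (g : G) (hp : IsProd l p) (hD : Gpd.D g p) :
      IsProd (g :: l) (Gpd.mul g p)

/-- `H₁⋯H_n`: the set of all defined composites `h₁⋯h_n` with `h_i ∈ H_i`. -/
def listProd {G : Type u} [Gpd G] (Hs : List (Set G)) : Set G :=
  {g | ∃ l : List G, List.Forall₂ (· ∈ ·) l Hs ∧ IsProd l g}

section Aux2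

lemma isId_prod_list {G : Type u} [Gpd G] {L : List (Set G)}
    (hw : ∀ H ∈ L, IsWide H) (hL : L ≠ []) {e : G} (he : IsId e) :
    ∃ l, List.Forall₂ (· ∈ ·) l L ∧ IsProd l e := by
  induction L with
  | nil => exact absurd rfl hL
  | cons H tl ih =>
    have heH : e ∈ H := (hw H List.mem_cons_self).2 he
    rcases eq_or_ne tl [] with rfl | htl
    · exact ⟨[e], List.Forall₂.cons heH List.Forall₂.nil, IsProd.single e⟩
    · obtain ⟨l', h1, h2⟩ := ih (fun K hK => hw K (List.mem_cons_of_mem _ hK)) htl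
      refine ⟨e :: l', List.Forall₂.cons heH h1, ?_⟩
      have := IsProd.cons e h2 he.1
      rwa [he.2] at this

lemma mem_listProd_of_mem {G : Type u} [Gpd G] {L : List (Set G)}
    (hw : ∀ H ∈ L, IsWide H) {H : Set G} (hH : H ∈ L) {x : G} (hx : x ∈ H) :
    x ∈ listProd L := by
  induction L with
  | nil => simp at hH
  | cons K tl ih =>
    rcases List.mem_cons.mp hH with rfl | hH'
    · rcases eq_or_ne tl [] with rfl | htl
      · exact ⟨[x], List.Forall₂.cons hx List.Forall₂.nil, IsProd.single x⟩
      · obtain ⟨l', h1, h2⟩ := isId_prod_list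
          (fun K' hK' => hw K' (List.mem_cons_of_mem _ hK')) htl (isId_d x)
        refine ⟨x :: l', List.Forall₂.cons hx h1, ?_⟩
        have := IsProd.cons x h2 (D_g_dg x)
        rwa [mul_g_dg] at this
    · obtain ⟨l', h1, h2⟩ := ih (fun K' hK' => hw K' (List.mem_cons_of_mem _ hK')) hH'
      refine ⟨r x :: l', List.Forall₂.cons ((hw K List.mem_cons_self).2 (isId_r x)) h1, ?_⟩
      have := IsProd.cons (r x) h2 (D_rg_g x)
      rwa [mul_rg_g] at this

lemma get_mem_eraseIdx {α : Type v} {L : List α} {i j : ℕ} (hj : j < L.length)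
    (hij : i ≠ j) : L.get ⟨j, hj⟩ ∈ L.eraseIdx i := by
  induction L generalizing i j with
  | nil => simp at hj
  | cons a tl ih =>
    cases i with
    | zero =>
      cases j with
      | zero => exact absurd rfl hij
      | succ j =>
        simp only [List.eraseIdx]
        exact List.get_mem tl ⟨j, by simpa using hj⟩
    | succ i =>
      cases j with
      | zero => simp [List.eraseIdx]
      | succ j =>
        have := ih (j := j) (i := i) (by simpa using hj) (fun h => hij (by rw [h]))
        simp only [List.eraseIdx, List.mem_cons]
        right
        exact this

end Aux2

/-- under (i),(ii),(iii), elements of distinct factors with matching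
(coinciding) domains and ranges commute. -/
theorem commute_of_decomposition {G : Type u} [Gpd G] (Hs : List (Set G))
    (hwide : ∀ H ∈ Hs, IsWide H)
    (h1 : ∀ g : G, g ∈ listProd Hs)
    (h2 : ∀ H ∈ Hs, IsNormal H)
    (h3 : ∀ (i : ℕ) (hi : i < Hs.length),
      Hs.get ⟨i, hi⟩ ∩ listProd (Hs.eraseIdx i) = objs G) :
    ∀ (i j : ℕ) (hi : i < Hs.length) (hj : j < Hs.length), i ≠ j →
      ∀ x ∈ Hs.get ⟨i, hi⟩, ∀ y ∈ Hs.get ⟨j, hj⟩,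
        r y = d x → d x = r x → r x = d y → Gpd.mul x y = Gpd.mul y x := by
  
  intro i j hi hj hij x hx y hy hry hdr hrd
  -- basic definedness facts
  have hDxy : D x y := D_dr.mpr hry.symm
  have hDyinvx : D y (inv x) := D_dr.mpr (by rw [← d_eq_r_inv, ← hrd]; exact hdr.symm)
  have hDp_invx : D (mul x y) (inv x) := (assoc x y (inv x) hDxy hDyinvx).1
  have hdq : d (mul (mul x y) (inv x)) = d (inv x) := d_mul hDp_invx
  have hDq_invy : D (mul (mul x y) (inv x)) (inv y) := by
    refine D_dr.mpr ?_
    rw [hdq, d_inv, ← d_eq_r_inv]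
    exact hrd
  have hnormj := h2 (Hs.get ⟨j, hj⟩) (List.get_mem Hs ⟨j, hj⟩)
  have hnormi := h2 (Hs.get ⟨i, hi⟩) (List.get_mem Hs ⟨i, hi⟩)
  -- q = (xy)x⁻¹ ∈ H_j by normality of H_j
  have hD1 : D (inv (inv x)) y := by rw [inv_inv']; exact hDxy
  have hD2 : D (mul (inv (inv x)) y) (inv x) := by rw [inv_inv']; exact hDp_invx
  have hq_mem : mul (mul x y) (inv x) ∈ Hs.get ⟨j, hj⟩ := by
    have := hnormj.2 (inv x) y hy hD1 hD2
    rwa [inv_inv'] at this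
  -- c = ((xy)x⁻¹)y⁻¹ ∈ H_j
  have hc_memj : mul (mul (mul x y) (inv x)) (inv y) ∈ Hs.get ⟨j, hj⟩ :=
    hnormj.1.1.2.2 _ _ hq_mem (hnormj.1.1.2.1 y hy) hDq_invy
  -- w = (y x⁻¹) y⁻¹ ∈ H_i by normality of H_i
  have hDu_invy : D (mul y (inv x)) (inv y) := by
    refine D_dr.mpr ?_
    rw [d_mul hDyinvx, d_inv, ← d_eq_r_inv]
    exact hrd
  have hD3 : D (inv (inv y)) (inv x) := by rw [inv_inv']; exact hDyinvx
  have hD4 : D (mul (inv (inv y)) (inv x)) (inv y) := by rw [inv_inv']; exact hDu_invy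
  have hw_mem : mul (mul y (inv x)) (inv y) ∈ Hs.get ⟨i, hi⟩ := by
    have := hnormi.2 (inv y) (inv x) (hnormi.1.1.2.1 x hx) hD3 hD4
    rwa [inv_inv'] at this
  -- reassociate: c = x · ((y x⁻¹) y⁻¹), hence c ∈ H_i
  have hassoc1 := assoc x y (inv x) hDxy hDyinvx
  have hassoc2 := assoc x (mul y (inv x)) (inv y) hassoc1.2.1 hDu_invy
  have hc_eq : mul (mul (mul x y) (inv x)) (inv y)
      = mul x (mul (mul y (inv x)) (inv y)) := by
    rw [hassoc1.2.2]
    exact hassoc2.2.2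
  have hc_memi : mul (mul (mul x y) (inv x)) (inv y) ∈ Hs.get ⟨i, hi⟩ := by
    rw [hc_eq]
    exact hnormi.1.1.2.2 x _ hx hw_mem hassoc2.2.1
  -- c lies in H_i ∩ (product of the others), hence is an identity
  have hc_ls : mul (mul (mul x y) (inv x)) (inv y) ∈ listProd (Hs.eraseIdx i) :=
    mem_listProd_of_mem (fun K hK => hwide K (List.eraseIdx_subset hK))
      (get_mem_eraseIdx hj hij) hc_memj
  have hc_id : IsId (mul (mul (mul x y) (inv x)) (inv y)) := by
    have : mul (mul (mul x y) (inv x)) (inv y) ∈ objs G := by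
      rw [← h3 i hi]
      exact ⟨hc_memi, hc_ls⟩
    exact this
  have hc_eq_id : mul (mul (mul x y) (inv x)) (inv y)
      = d (mul (mul (mul x y) (inv x)) (inv y)) := (d_of_isId hc_id).symm
  -- from c being an identity conclude q = y
  have hassoc3 := assoc (mul (mul x y) (inv x)) (inv y) y hDq_invy (inv_left y)
  have hq_dq : mul (mul (mul x y) (inv x)) (d y) = mul (mul x y) (inv x) := by
    have hdd : d y = d (mul (mul x y) (inv x)) := by
      rw [hdq, d_inv]
      exact hrd.symm
    rw [hdd, mul_g_dg]
  have h6 : mul (mul (mul x y) (inv x)) (mul (inv y) y) = mul (mul x y) (inv x) := hq_dq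
  have h5 : mul (mul (mul (mul x y) (inv x)) (inv y)) y = mul (mul x y) (inv x) := by
    rw [hassoc3.2.2]
    exact h6
  have h7 : mul (mul (mul (mul x y) (inv x)) (inv y)) y = y := by
    have hcr : mul (mul (mul x y) (inv x)) (inv y) = r y := by
      rw [hc_eq_id, d_mul hDq_invy, d_inv]
    rw [hcr, mul_rg_g]
  rw [h5] at h7
  -- h7 : (xy)x⁻¹ = y; multiply on the right by x
  have hassoc4 := assoc (mul x y) (inv x) x hDp_invx (inv_left x)
  have h8 : mul (mul x y) (mul (inv x) x) = mul x y := by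
    have hdd : d x = d (mul x y) := by
      rw [d_mul hDxy, ← hrd]
      exact hdr
    show mul (mul x y) (d x) = mul x y
    rw [hdd, mul_g_dg]
  have h9 : mul (mul (mul x y) (inv x)) x = mul x y := by
    rw [hassoc4.2.2]
    exact h8
  rw [h7] at h9
  exact h9.symm
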